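/- Let A = (a_{ij}) be an n×n real matrix such that a_{ij} < 0 whenever i ≠ j, and such that for every i the row sum ∑_{j=1}^n a_{ij} is strictly positive. Then det(A) ≠ 0. -/
import Mathlib

theorem stmt_0 {n : ℕ} (A : Matrix (Fin n) (Fin n) ℝ)
    (hoff : ∀ i j, i ≠ j → A i j < 0)
    (hrow : ∀ i, 0 < ∑ j, A i j) :
    A.det ≠ 0 := by
  apply det_ne_zero_of_sum_row_lt_diag
  intro k
  have hsum : ∑ j ∈ Finset.univ.erase k, A k j + A k k = ∑ j, A k j := by
    rw [add_comm, Finset.add_sum_erase _ _ (Finset.mem_univ k)]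
  have h1 : ∑ j ∈ Finset.univ.erase k, ‖A k j‖ = -∑ j ∈ Finset.univ.erase k, A k j := by
    rw [← Finset.sum_neg_distrib]
    apply Finset.sum_congr rfl
    intro j hj
    rw [Real.norm_eq_abs, abs_of_neg (hoff k j (Ne.symm (Finset.ne_of_mem_erase hj)))]
  have h2 : 0 < A k k := by
    have := hrow k
    have hneg : ∑ j ∈ Finset.univ.erase k, A k j ≤ 0 :=
      Finset.sum_nonpos fun j hj => le_of_lt (hoff k j (Ne.symm (Finset.ne_of_mem_erase hj)))
    linarith
  rw [h1, Real.norm_eq_abs, abs_of_pos h2]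
  have := hrow k
  linarith
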